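/- Let v be a subadditive valuation on [m] with n agents and suppose [m] is partitioned into A_1, ..., A_n, R with v(A_j) ≤ V for all j and v(R) ≤ W. Define prices p_g = 1/(n·|A_k|) for g ∈ A_k and p_g = 0 for g ∈ R, assuming each A_k is nonempty; then the total price is 1, and if additionally v has binary marginals (so any set T satisfies v(T) ≤ |T|), every bundle of price at most 1/n has value at most V + W under v. -/

import Mathlib

open Finset

/-- `v` is an XOS valuation: pointwise maximum of a nonempty family of
additive (nonnegative) functions. -/
def IsXOS (m : ℕ) (v : Finset (Fin m) → ℝ) : Prop :=
  ∃ F : Set (Fin m → ℝ), F.Nonempty ∧ (∀ f ∈ F, ∀ g, 0 ≤ f g) ∧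
    (∀ S : Finset (Fin m), ∃ f ∈ F, v S = ∑ g ∈ S, f g) ∧
    (∀ f ∈ F, ∀ S : Finset (Fin m), ∑ g ∈ S, f g ≤ v S)

/-- `v` has binary marginals: adding any good changes the value by 0 or 1. -/
def BinaryMarginals (m : ℕ) (v : Finset (Fin m) → ℝ) : Prop :=
  ∀ S : Finset (Fin m), ∀ g : Fin m,
    v (insert g S) - v S = 0 ∨ v (insert g S) - v S = 1

/-- `A` is a partition of the goods `[m]` into `n` (possibly empty) bundles. -/
def IsPartition (m n : ℕ) (A : Fin n → Finset (Fin m)) : Prop :=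
  (∀ i j : Fin n, i ≠ j → Disjoint (A i) (A j)) ∧
    Finset.univ.biUnion A = (Finset.univ : Finset (Fin m))

/-- `μ` is the maximin share of `v` over `n` agents: the maximum over all
partitions into `n` bundles of the minimum bundle value. -/
def IsMMS (m n : ℕ) (v : Finset (Fin m) → ℝ) (μ : ℝ) : Prop :=
  (∃ A : Fin n → Finset (Fin m), IsPartition m n A ∧ ∀ j, μ ≤ v (A j)) ∧
  (∀ A : Fin n → Finset (Fin m), IsPartition m n A → ∃ j, v (A j) ≤ μ)

/-- `a` is the AnyPrice share (price-based): the minimum over nonnegative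
price vectors of total price 1 of the maximum value of a bundle of price
at most `1/n`. -/
def IsAPS (m n : ℕ) (v : Finset (Fin m) → ℝ) (a : ℝ) : Prop :=
  (∃ p : Fin m → ℝ, (∀ g, 0 ≤ p g) ∧ (∑ g, p g = 1) ∧
    ∀ S : Finset (Fin m), (∑ g ∈ S, p g) ≤ 1 / n → v S ≤ a) ∧
  (∀ p : Fin m → ℝ, (∀ g, 0 ≤ p g) → (∑ g, p g = 1) →
    ∃ S : Finset (Fin m), (∑ g ∈ S, p g) ≤ 1 / n ∧ a ≤ v S)

lemma v_le_card {m : ℕ} (v : Finset (Fin m) → ℝ) (h0 : v ∅ = 0)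
    (hbm : BinaryMarginals m v) (T : Finset (Fin m)) : v T ≤ T.card := by
  induction T using Finset.induction_on with
  | empty => simp [h0]
  | @insert a s h ih =>
    rcases hbm s a with h1 | h1 <;>
      simp only [Finset.card_insert_of_notMem h, Nat.cast_add, Nat.cast_one] <;> linarith

theorem price_bound_from_balanced_partition {m n : ℕ}
    (v : Finset (Fin m) → ℝ)
    (hmono : ∀ A B : Finset (Fin m), A ⊆ B → v A ≤ v B)
    (hsub : ∀ A B : Finset (Fin m), v (A ∪ B) ≤ v A + v B)
    (h0 : v ∅ = 0)
    (hbm : BinaryMarginals m v)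
    (hn : 1 ≤ n)
    (A : Fin n → Finset (Fin m)) (R : Finset (Fin m))
    (hdisj : ∀ i j : Fin n, i ≠ j → Disjoint (A i) (A j))
    (hdisjR : ∀ j : Fin n, Disjoint (A j) R)
    (hcover : Finset.univ.biUnion A ∪ R = (Finset.univ : Finset (Fin m)))
    (hne : ∀ k : Fin n, (A k).Nonempty)
    (hnw : ∀ k : Fin n, v (A k) = ((A k).card : ℝ))
    (V W : ℝ)
    (hV : ∀ j : Fin n, v (A j) ≤ V) (hW : v R ≤ W)
    (p : Fin m → ℝ)
    (hpA : ∀ k : Fin n, ∀ g ∈ A k, p g = 1 / ((n : ℝ) * (A k).card))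
    (hpR : ∀ g ∈ R, p g = 0) :
    (∑ g, p g = 1) ∧
    ∀ S : Finset (Fin m), (∑ g ∈ S, p g) ≤ 1 / n → v S ≤ V + W := by
  have hn0 : (0:ℝ) < n := by exact_mod_cast hn
  have hpd : ((Finset.univ : Finset (Fin n)) : Set (Fin n)).PairwiseDisjoint A := by
    intro i _ j _ hij; exact hdisj i j hij
  have hsumAk : ∀ k : Fin n, ∑ g ∈ A k, p g = 1 / n := by
    intro k
    have hc : (0:ℝ) < (A k).card := by exact_mod_cast (hne k).card_pos
    rw [Finset.sum_congr rfl (hpA k), Finset.sum_const, nsmul_eq_mul]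
    field_simp
  have hsum1 : ∑ g, p g = 1 := by
    rw [← hcover, Finset.sum_union ?hd, Finset.sum_biUnion hpd]
    · rw [Finset.sum_congr rfl (fun k _ => hsumAk k), Finset.sum_const,
        Finset.sum_eq_zero hpR, nsmul_eq_mul]
      simp
      field_simp
    case hd =>
      rw [Finset.disjoint_biUnion_left]
      exact fun i _ => hdisjR i
  refine ⟨hsum1, fun S hS => ?_⟩
  -- decompose S
  set B := Finset.univ.biUnion A with hB
  have hSdecomp : S = (S ∩ B) ∪ (S ∩ R) := by
    rw [← Finset.inter_union_distrib_left, hcover, Finset.inter_univ]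
  have hVk : ∀ k : Fin n, ((A k).card : ℝ) ≤ V := fun k => (hnw k) ▸ hV k
  -- price lower bound
  have hratio : ∑ k : Fin n, ((S ∩ A k).card : ℝ) / (A k).card ≤ 1 := by
    have hsub' : ∑ g ∈ S ∩ B, p g ≤ ∑ g ∈ S, p g := by
      apply Finset.sum_le_sum_of_subset_of_nonneg (Finset.inter_subset_left)
      intro g hg _
      by_cases hgB : g ∈ B
      · rw [hB, Finset.mem_biUnion] at hgB
        obtain ⟨k, _, hk⟩ := hgB
        rw [hpA k g hk]
        exact div_nonneg zero_le_one (mul_nonneg hn0.le (Nat.cast_nonneg _))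
      · have hgR : g ∈ R := by
          have := Finset.mem_univ g
          rw [← hcover, Finset.mem_union] at this
          tauto
        rw [hpR g hgR]
    have hIB : S ∩ B = Finset.univ.biUnion (fun k => S ∩ A k) := by
      rw [hB, Finset.inter_biUnion]
    have hpd' : ((Finset.univ : Finset (Fin n)) : Set (Fin n)).PairwiseDisjoint
        (fun k => S ∩ A k) := by
      intro i _ j _ hij
      exact (hdisj i j hij).mono Finset.inter_subset_right Finset.inter_subset_right
    have hval : ∑ g ∈ S ∩ B, p g
        = ∑ k : Fin n, ((S ∩ A k).card : ℝ) / ((n : ℝ) * (A k).card) := by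
      rw [hIB, Finset.sum_biUnion hpd']
      refine Finset.sum_congr rfl (fun k _ => ?_)
      rw [Finset.sum_congr rfl (fun g hg => hpA k g (Finset.mem_inter.1 hg).2),
        Finset.sum_const, nsmul_eq_mul]
      ring
    have h1 : ∑ k : Fin n, ((S ∩ A k).card : ℝ) / ((n : ℝ) * (A k).card) ≤ 1 / n := by
      rw [← hval]; exact le_trans hsub' hS
    have h2 : ∀ k : Fin n, ((S ∩ A k).card : ℝ) / ((n : ℝ) * (A k).card)
        = (((S ∩ A k).card : ℝ) / (A k).card) / n := by
      intro k; ring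
    rw [Finset.sum_congr rfl (fun k _ => h2 k), ← Finset.sum_div] at h1
    rw [div_le_div_iff_of_pos_right hn0] at h1
    linarith [h1]
  have hcardB : ((S ∩ B).card : ℝ) ≤ V := by
    have hIB : S ∩ B = Finset.univ.biUnion (fun k => S ∩ A k) := by
      rw [hB, Finset.inter_biUnion]
    have hpd' : ((Finset.univ : Finset (Fin n)) : Set (Fin n)).PairwiseDisjoint
        (fun k => S ∩ A k) := by
      intro i _ j _ hij
      exact (hdisj i j hij).mono Finset.inter_subset_right Finset.inter_subset_right
    have hcard : ((S ∩ B).card : ℝ) = ∑ k : Fin n, ((S ∩ A k).card : ℝ) := by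
      rw [hIB, Finset.card_biUnion (fun i _ j _ hij => hpd' (Finset.mem_coe.2 (Finset.mem_univ i)) (Finset.mem_coe.2 (Finset.mem_univ j)) hij)]
      push_cast; rfl
    rw [hcard]
    calc ∑ k : Fin n, ((S ∩ A k).card : ℝ)
        ≤ ∑ k : Fin n, (((S ∩ A k).card : ℝ) / (A k).card) * V := by
          refine Finset.sum_le_sum (fun k _ => ?_)
          have hc : (0:ℝ) < (A k).card := by exact_mod_cast (hne k).card_pos
          rw [div_mul_eq_mul_div, le_div_iff₀ hc]
          have : ((S ∩ A k).card : ℝ) * (A k).card ≤ ((S ∩ A k).card : ℝ) * V :=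
            mul_le_mul_of_nonneg_left (hVk k) (Nat.cast_nonneg _)
          linarith
      _ = (∑ k : Fin n, ((S ∩ A k).card : ℝ) / (A k).card) * V := by
          rw [Finset.sum_mul]
      _ ≤ 1 * V := by
          refine mul_le_mul_of_nonneg_right hratio ?_
          exact le_trans (Nat.cast_nonneg _ : (0:ℝ) ≤ ((A ⟨0, hn⟩).card : ℝ)) (hVk ⟨0, hn⟩)
      _ = V := one_mul V
  calc v S = v ((S ∩ B) ∪ (S ∩ R)) := by rw [← hSdecomp]
    _ ≤ v (S ∩ B) + v (S ∩ R) := hsub _ _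
    _ ≤ ((S ∩ B).card : ℝ) + v R :=
        add_le_add (v_le_card v h0 hbm _) (hmono _ _ Finset.inter_subset_right)
    _ ≤ V + W := add_le_add hcardB hW
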